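/- Let E be a finite-dimensional real normed vector space and A : E → (E →L[ℝ] E →L[ℝ] E) a smooth map such that each bilinear map A(p) is symmetric and the induced multiplication (X∘Y)(p) = A(p)(X(p))(Y(p)) is associative. Then the Hertling–Manin expression Q(X,Y,Z,W) := [X∘Y, Z∘W] − [X∘Y,Z]∘W − Z∘[X∘Y,W] − X∘[Y, Z∘W] − Y∘[X, Z∘W] + X∘[Y,Z]∘W + X∘Z∘[Y,W] + Y∘[X,Z]∘W + Y∘Z∘[X,W] is a tensor, i.e. it is function-linear in each argument: for every smooth f : E → ℝ and all smooth vector fields X,Y,Z,W, Q(f·X,Y,Z,W) = f·Q(X,Y,Z,W), Q(X,f·Y,Z,W) = f·Q(X,Y,Z,W), Q(X,Y,f·Z,W) = f·Q(X,Y,Z,W), and Q(X,Y,Z,f·W) = f·Q(X,Y,Z,W). -/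

import Mathlib

open ContDiff

variable {E : Type*} [NormedAddCommGroup E] [NormedSpace ℝ E]

/-- Lie bracket of vector fields on a normed space:
`[X,Y](p) = (DY)(p)(X(p)) - (DX)(p)(Y(p))`. -/
noncomputable def lieB (X Y : E → E) : E → E :=
  fun p => fderiv ℝ Y p (X p) - fderiv ℝ X p (Y p)

/-- Multiplication on vector fields induced by a field of bilinear maps `A`:
`(X ∘ Y)(p) = A(p)(X(p))(Y(p))`. -/
noncomputable def mulA (A : E → (E →L[ℝ] E →L[ℝ] E)) (X Y : E → E) : E → E :=
  fun p => A p (X p) (Y p)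

/-- The nine-term Hertling–Manin expression `Q(X,Y,Z,W)`. -/
noncomputable def hmQ (A : E → (E →L[ℝ] E →L[ℝ] E)) (X Y Z W : E → E) : E → E :=
  fun p =>
    lieB (mulA A X Y) (mulA A Z W) p
    - mulA A (lieB (mulA A X Y) Z) W p
    - mulA A Z (lieB (mulA A X Y) W) p
    - mulA A X (lieB Y (mulA A Z W)) p
    - mulA A Y (lieB X (mulA A Z W)) p
    + mulA A (mulA A X (lieB Y Z)) W p
    + mulA A (mulA A X Z) (lieB Y W) p
    + mulA A (mulA A Y (lieB X Z)) W p
    + mulA A (mulA A Y Z) (lieB X W) p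


lemma mulA_contDiff (A : E → (E →L[ℝ] E →L[ℝ] E)) (hA : ContDiff ℝ ∞ A) {X Y : E → E}
    (hX : ContDiff ℝ ∞ X) (hY : ContDiff ℝ ∞ Y) : ContDiff ℝ ∞ (mulA A X Y) :=
  (hA.clm_apply hX).clm_apply hY

lemma mulA_smul_left (A : E → (E →L[ℝ] E →L[ℝ] E)) (f : E → ℝ) (X Y : E → E) :
    mulA A (fun p => f p • X p) Y = fun p => f p • mulA A X Y p := by
  funext p; simp [mulA]

lemma mulA_smul_right (A : E → (E →L[ℝ] E →L[ℝ] E)) (f : E → ℝ) (X Y : E → E) :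
    mulA A X (fun p => f p • Y p) = fun p => f p • mulA A X Y p := by
  funext p; simp [mulA]

lemma lieB_smul_left {f : E → ℝ} {X : E → E} (Y : E → E) (hf : ContDiff ℝ ∞ f)
    (hX : ContDiff ℝ ∞ X) :
    lieB (fun q => f q • X q) Y = fun p => f p • lieB X Y p - fderiv ℝ f p (Y p) • X p := by
  funext p
  have hf' := hf.differentiable (by simp)
  have hX' := hX.differentiable (by simp)
  simp only [lieB, fderiv_fun_smul (hf' p) (hX' p)]
  simp only [ContinuousLinearMap.add_apply, ContinuousLinearMap.smul_apply,
    ContinuousLinearMap.smulRight_apply, map_smul]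
  module

lemma lieB_smul_right {f : E → ℝ} {Y : E → E} (X : E → E) (hf : ContDiff ℝ ∞ f)
    (hY : ContDiff ℝ ∞ Y) :
    lieB X (fun q => f q • Y q) = fun p => f p • lieB X Y p + fderiv ℝ f p (X p) • Y p := by
  funext p
  have hf' := hf.differentiable (by simp)
  have hY' := hY.differentiable (by simp)
  simp only [lieB, fderiv_fun_smul (hf' p) (hY' p)]
  simp only [ContinuousLinearMap.add_apply, ContinuousLinearMap.smul_apply,
    ContinuousLinearMap.smulRight_apply, map_smul]
  module

lemma hmQ_swapXY (A : E → (E →L[ℝ] E →L[ℝ] E))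
    (hsymm : ∀ p u v : E, A p u v = A p v u) (X Y Z W : E → E) : hmQ A X Y Z W = hmQ A Y X Z W := by
  have h1 : mulA A X Y = mulA A Y X := funext fun p => hsymm p _ _
  funext p
  simp only [hmQ, h1]
  abel

lemma hmQ_swapZW (A : E → (E →L[ℝ] E →L[ℝ] E))
    (hsymm : ∀ p u v : E, A p u v = A p v u)
    (hassoc : ∀ p u v w : E, A p (A p u v) w = A p u (A p v w)) (X Y Z W : E → E) : hmQ A X Y Z W = hmQ A X Y W Z := by
  have h1 : mulA A Z W = mulA A W Z := funext fun p => hsymm p _ _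
  have assoc' : ∀ p u v w : E, A p (A p u v) w = A p (A p u w) v := by
    intro p u v w
    rw [hassoc, hsymm p v w, ← hassoc]
  funext p
  simp only [hmQ, h1, mulA]
  rw [hsymm p (lieB (mulA A X Y) Z p) (W p), hsymm p (lieB (mulA A X Y) W p) (Z p),
    assoc' p (X p) (lieB Y Z p) (W p), assoc' p (X p) (Z p) (lieB Y W p),
    assoc' p (Y p) (lieB X Z p) (W p), assoc' p (Y p) (Z p) (lieB X W p)]
  abel

lemma hmQ_smul_X (A : E → (E →L[ℝ] E →L[ℝ] E)) (hA : ContDiff ℝ ∞ A)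
    (hsymm : ∀ p u v : E, A p u v = A p v u)
    (hassoc : ∀ p u v w : E, A p (A p u v) w = A p u (A p v w))
    (f : E → ℝ) (X Y Z W : E → E) (hf : ContDiff ℝ ∞ f)
    (hX : ContDiff ℝ ∞ X) (hY : ContDiff ℝ ∞ Y) (hZ : ContDiff ℝ ∞ Z) (hW : ContDiff ℝ ∞ W) :
    hmQ A (fun p => f p • X p) Y Z W = fun p => f p • hmQ A X Y Z W p := by
  have hB := mulA_contDiff A hA hX hY
  funext p
  simp only [hmQ, mulA_smul_left]
  simp only [lieB_smul_left (mulA A Z W) hf hB, lieB_smul_left Z hf hB,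
    lieB_smul_left W hf hB, lieB_smul_left (mulA A Z W) hf hX,
    lieB_smul_left Z hf hX, lieB_smul_left W hf hX]
  simp only [mulA, map_sub, map_smul, ContinuousLinearMap.sub_apply,
    ContinuousLinearMap.smul_apply, map_add, ContinuousLinearMap.add_apply, smul_sub, smul_add]
  have e3 : A p (A p (Y p) (Z p)) (X p) = A p (Z p) (A p (Y p) (X p)) := by
    rw [hassoc, hsymm p (Z p) (X p), ← hassoc, hsymm p (A p (Y p) (X p)) (Z p)]
  rw [e3, hsymm p (Y p) (X p)]
  module

lemma hmQ_smul_Z (A : E → (E →L[ℝ] E →L[ℝ] E)) (hA : ContDiff ℝ ∞ A)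
    (hsymm : ∀ p u v : E, A p u v = A p v u)
    (hassoc : ∀ p u v w : E, A p (A p u v) w = A p u (A p v w))
    (f : E → ℝ) (X Y Z W : E → E) (hf : ContDiff ℝ ∞ f)
    (hX : ContDiff ℝ ∞ X) (hY : ContDiff ℝ ∞ Y) (hZ : ContDiff ℝ ∞ Z) (hW : ContDiff ℝ ∞ W) :
    hmQ A X Y (fun p => f p • Z p) W = fun p => f p • hmQ A X Y Z W p := by
  have hC := mulA_contDiff A hA hZ hW
  funext p
  simp only [hmQ, mulA_smul_left, mulA_smul_right]
  simp only [lieB_smul_right (mulA A X Y) hf hC, lieB_smul_right X hf hC,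
    lieB_smul_right Y hf hC, lieB_smul_right (mulA A X Y) hf hZ,
    lieB_smul_right X hf hZ, lieB_smul_right Y hf hZ]
  simp only [mulA, map_sub, map_smul, ContinuousLinearMap.sub_apply,
    ContinuousLinearMap.smul_apply, map_add, ContinuousLinearMap.add_apply, smul_sub, smul_add]
  rw [hassoc p (X p) (Z p) (W p), hassoc p (Y p) (Z p) (W p)]
  module

/-- the Hertling–Manin expression is a tensor (function-linear in each
argument). -/
theorem stmt1 {E : Type*} [NormedAddCommGroup E] [NormedSpace ℝ E] [FiniteDimensional ℝ E]
    (A : E → (E →L[ℝ] E →L[ℝ] E)) (hA : ContDiff ℝ ∞ A)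
    (hsymm : ∀ p u v : E, A p u v = A p v u)
    (hassoc : ∀ p u v w : E, A p (A p u v) w = A p u (A p v w)) :
    ∀ (f : E → ℝ) (X Y Z W : E → E), ContDiff ℝ ∞ f →
      ContDiff ℝ ∞ X → ContDiff ℝ ∞ Y → ContDiff ℝ ∞ Z → ContDiff ℝ ∞ W →
      hmQ A (fun p => f p • X p) Y Z W = (fun p => f p • hmQ A X Y Z W p) ∧
      hmQ A X (fun p => f p • Y p) Z W = (fun p => f p • hmQ A X Y Z W p) ∧
      hmQ A X Y (fun p => f p • Z p) W = (fun p => f p • hmQ A X Y Z W p) ∧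
      hmQ A X Y Z (fun p => f p • W p) = (fun p => f p • hmQ A X Y Z W p) := by
  intro f X Y Z W hf hX hY hZ hW
  refine ⟨hmQ_smul_X A hA hsymm hassoc f X Y Z W hf hX hY hZ hW, ?_,
    hmQ_smul_Z A hA hsymm hassoc f X Y Z W hf hX hY hZ hW, ?_⟩
  · rw [hmQ_swapXY A hsymm X (fun p => f p • Y p) Z W,
      hmQ_smul_X A hA hsymm hassoc f Y X Z W hf hY hX hZ hW,
      hmQ_swapXY A hsymm Y X Z W]
  · rw [hmQ_swapZW A hsymm hassoc X Y Z (fun p => f p • W p),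
      hmQ_smul_Z A hA hsymm hassoc f X Y W Z hf hX hY hW hZ,
      hmQ_swapZW A hsymm hassoc X Y W Z]
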